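/- Let R = [[A, B],[0, C]] be a block upper-triangular real matrix with A a square invertible P×P block, B of size P×(M−P), and C of size (M−P)×(M−P') appropriately. After exchanging the i-th column of [A;0] with the (P+j)-th column of [B;C] and re-triangularizing via an orthogonal transformation to obtain R̄ = [[Ā, B̄],[0, C̄]] with Ā having positive diagonal, the determinant ratio satisfies det(Ā)/det(A) = sqrt( ((A⁻¹B)_{i,j})² + (‖C(:,j)‖₂ · ‖A⁻¹(i,:)‖₂)² ). -/
import Mathlib

/-- Euclidean norm of a finite real vector. -/
noncomputable def vecNorm {n : ℕ} (x : Fin n → ℝ) : ℝ := Real.sqrt (∑ l, (x l) ^ 2)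

open Matrix in
/-- The adjugate entries in column positions other than `i` don't depend on column `i`. -/
lemma adjugate_updateCol_same {P : ℕ} (A : Matrix (Fin P) (Fin P) ℝ)
    (i r : Fin P) (b : Fin P → ℝ) :
    adjugate (A.updateCol i b) i r = adjugate A i r := by
  classical
  rw [adjugate_apply, adjugate_apply]
  set Y : Matrix (Fin P) (Fin P) ℝ := A.updateRow r (Pi.single i 1) with hY
  have h1 : (A.updateCol i b).updateRow r (Pi.single i 1) =
      Y.updateCol i (fun a => if a = r then 1 else b a) := by
    ext a c
    by_cases har : a = r <;> by_cases hci : c = i <;>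
      simp [Y, Matrix.updateRow_apply, Matrix.updateCol_apply, har, hci,
        Pi.single_apply]
  have h2 : Y = Y.updateCol i (fun a => if a = r then 1 else A a i) := by
    ext a c
    by_cases har : a = r <;> by_cases hci : c = i <;>
      simp [Y, Matrix.updateRow_apply, Matrix.updateCol_apply, har, hci,
        Pi.single_apply]
  rw [h1]
  conv_rhs => rw [h2]
  have hsplit : (fun a => if a = r then (1:ℝ) else b a) =
      (fun a => if a = r then (1:ℝ) else A a i) + (fun a => if a = r then 0 else b a - A a i) := by
    funext a; by_cases har : a = r <;> simp [har]
  rw [hsplit, Matrix.det_updateCol_add]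
  have hz : (Y.updateCol i fun a => if a = r then (0:ℝ) else b a - A a i).det = 0 := by
    apply Matrix.det_eq_zero_of_row_eq_zero r
    intro c
    by_cases hci : c = i <;>
      simp [Y, Matrix.updateCol_apply, Matrix.updateRow_apply, hci, Pi.single_apply]
  rw [hz, add_zero]

open Matrix in
theorem stmt9 {P m : ℕ}
    (A : Matrix (Fin P) (Fin P) ℝ) (B : Matrix (Fin P) (Fin m) ℝ)
    (C : Matrix (Fin m) (Fin m) ℝ)
    (hAtri : A.BlockTriangular (id : Fin P → Fin P))
    (hAdiag : ∀ i, 0 < A i i)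
    (i : Fin P) (j : Fin m)
    (Abar : Matrix (Fin P) (Fin P) ℝ) (Bbar : Matrix (Fin P) (Fin m) ℝ)
    (Cbar : Matrix (Fin m) (Fin m) ℝ)
    (hAbarTri : Abar.BlockTriangular (id : Fin P → Fin P))
    (hAbardiag : ∀ i, 0 < Abar i i)
    (U : Matrix (Fin P ⊕ Fin m) (Fin P ⊕ Fin m) ℝ)
    (hU : U.transpose * U = 1)
    (hretriEq : Matrix.fromBlocks Abar Bbar 0 Cbar =
      U * (Matrix.fromBlocks A B 0 C).submatrix id (Equiv.swap (Sum.inl i) (Sum.inr j))) :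
    Abar.det / A.det =
      Real.sqrt (((A⁻¹ * B) i j) ^ 2 +
        (vecNorm (fun l => C l j) * vecNorm (fun l => A⁻¹ i l)) ^ 2) := by
  classical
  have hdetA : (0:ℝ) < A.det := by
    rw [Matrix.det_of_upperTriangular hAtri]; exact Finset.prod_pos fun k _ => hAdiag k
  have hdetAbar : (0:ℝ) < Abar.det := by
    rw [Matrix.det_of_upperTriangular hAbarTri]; exact Finset.prod_pos fun k _ => hAbardiag k
  have hAne : A.det ≠ 0 := ne_of_gt hdetA
  set b : Fin P → ℝ := fun a => B a j with hb
  set M1 : Matrix (Fin P) (Fin P) ℝ := A.updateCol i b with hM1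
  set c2 : ℝ := ∑ l, (C l j)^2 with hc2
  set s2 : ℝ := ∑ l, (A⁻¹ i l)^2 with hs2
  set x : ℝ := (A⁻¹ * B) i j with hx
  have hc2nn : 0 ≤ c2 := Finset.sum_nonneg fun _ _ => sq_nonneg _
  have hs2nn : 0 ≤ s2 := Finset.sum_nonneg fun _ _ => sq_nonneg _
  -- adjugate of A in terms of A⁻¹
  have hadj : ∀ r, A.adjugate i r = A.det * A⁻¹ i r := by
    intro r
    rw [Matrix.inv_def, Ring.inverse_eq_inv']
    simp only [Matrix.smul_apply, smul_eq_mul]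
    field_simp
  have hadjM1 : ∀ r, M1.adjugate i r = A.det * A⁻¹ i r := by
    intro r; rw [hM1, adjugate_updateCol_same, hadj]
  have hdetM1 : M1.det = A.det * x := by
    have h : (A.updateCol i b).det = A.adjugate.mulVec b i := by
      rw [← Matrix.cramer_apply, Matrix.cramer_eq_adjugate_mulVec]
    rw [hM1, h]
    simp only [Matrix.mulVec, dotProduct, hadj, hx, Matrix.mul_apply, hb]
    rw [Finset.mul_sum]
    exact Finset.sum_congr rfl fun r _ => by ring
  -- the swapped matrix and its first P columns
  set Rm : Matrix (Fin P ⊕ Fin m) (Fin P ⊕ Fin m) ℝ :=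
    (Matrix.fromBlocks A B 0 C).submatrix id (Equiv.swap (Sum.inl i) (Sum.inr j)) with hRm
  set N : Matrix (Fin P ⊕ Fin m) (Fin P) ℝ := Matrix.of fun r a => Rm r (Sum.inl a) with hN
  have hNl : ∀ (r : Fin P) (a : Fin P), N (Sum.inl r) a = M1 r a := by
    intro r a
    by_cases ha : a = i <;>
      simp [hN, hRm, hM1, Matrix.submatrix_apply, Equiv.swap_apply_def, ha,
        Matrix.updateCol_apply, hb]
  have hNr : ∀ (r : Fin m) (a : Fin P), N (Sum.inr r) a = if a = i then C r j else 0 := by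
    intro r a
    by_cases ha : a = i <;>
      simp [hN, hRm, Matrix.submatrix_apply, Equiv.swap_apply_def, ha]
  -- Gram matrix equality
  have hgram : Abarᵀ * Abar = Nᵀ * N := by
    have h1 : (Matrix.fromBlocks Abar Bbar 0 Cbar)ᵀ * (Matrix.fromBlocks Abar Bbar 0 Cbar)
        = Rmᵀ * Rm := by
      rw [hretriEq, Matrix.transpose_mul, Matrix.mul_assoc, ← Matrix.mul_assoc Uᵀ U, hU,
        Matrix.one_mul]
    ext a c
    have h2 := congrFun (congrFun h1 (Sum.inl a)) (Sum.inl c)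
    simp only [Matrix.mul_apply, Matrix.transpose_apply, Fintype.sum_sum_type,
      Matrix.fromBlocks_apply₁₁, Matrix.fromBlocks_apply₂₁, Matrix.zero_apply,
      mul_zero, zero_mul, Finset.sum_const_zero, add_zero] at h2 ⊢
    rw [h2]
    simp [hN]
  set G : Matrix (Fin P) (Fin P) ℝ := M1ᵀ * M1 with hG
  have hNN : Nᵀ * N = G.updateRow i (G i + c2 • (Pi.single i 1 : Fin P → ℝ)) := by
    ext a c
    rw [Matrix.updateRow_apply]
    simp only [Matrix.mul_apply, Matrix.transpose_apply, Fintype.sum_sum_type, hNl, hNr]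
    by_cases ha : a = i
    · rw [ha, if_pos rfl]
      simp only [Pi.add_apply, Pi.smul_apply, smul_eq_mul, hG, Matrix.mul_apply,
        Matrix.transpose_apply, Pi.single_apply]
      by_cases hc : c = i
      · simp [hc, hc2, pow_two]
      · simp [hc]
    · rw [if_neg ha]
      simp [hG, Matrix.mul_apply, ha]
  have hdetNN : (Nᵀ * N).det = A.det ^ 2 * (x ^ 2 + c2 * s2) := by
    rw [hNN, Matrix.det_updateRow_add, Matrix.updateRow_eq_self, Matrix.det_updateRow_smul,
      ← Matrix.adjugate_apply]
    have hGdet : G.det = (A.det * x) ^ 2 := by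
      rw [hG, Matrix.det_mul, Matrix.det_transpose, hdetM1]; ring
    have hGadj : G.adjugate i i = A.det ^ 2 * s2 := by
      rw [hG, Matrix.adjugate_mul_distrib, ← Matrix.adjugate_transpose, Matrix.mul_apply]
      simp only [Matrix.transpose_apply, hadjM1]
      rw [hs2, Finset.mul_sum]
      exact Finset.sum_congr rfl fun r _ => by ring
    rw [hGdet, hGadj]; ring
  have hAbar2 : Abar.det ^ 2 = A.det ^ 2 * (x ^ 2 + c2 * s2) := by
    have h3 : (Abarᵀ * Abar).det = Abar.det ^ 2 := by
      rw [Matrix.det_mul, Matrix.det_transpose]; ring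
    rw [← h3, hgram, hdetNN]
  have hXnn : 0 ≤ x ^ 2 + c2 * s2 :=
    add_nonneg (sq_nonneg _) (mul_nonneg hc2nn hs2nn)
  have hAbarEq : Abar.det = A.det * Real.sqrt (x ^ 2 + c2 * s2) := by
    have h4 : Abar.det = Real.sqrt (Abar.det ^ 2) := (Real.sqrt_sq hdetAbar.le).symm
    rw [h4, hAbar2, Real.sqrt_mul (sq_nonneg _), Real.sqrt_sq hdetA.le]
  rw [hAbarEq, mul_div_cancel_left₀ _ hAne]
  congr 1
  have hv1 : (vecNorm fun l => C l j) ^ 2 = c2 := by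
    rw [vecNorm, Real.sq_sqrt (Finset.sum_nonneg fun _ _ => sq_nonneg _)]
  have hv2 : (vecNorm fun l => A⁻¹ i l) ^ 2 = s2 := by
    rw [vecNorm, Real.sq_sqrt (Finset.sum_nonneg fun _ _ => sq_nonneg _)]
  rw [mul_pow, hv1, hv2]
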